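/- Let (Ω, 𝔉, P) be a probability space, V : Ω → ℝ^n a random vector, and R : Ω → (0, ∞) a measurable function, such that all entries of the random matrices V Vᵀ · R, V Vᵀ, and V Vᵀ / R are integrable, and such that both J = E[V Vᵀ] and J_R = E[V Vᵀ · R] are invertible. Then J⁻¹ · E[V Vᵀ / R] · J⁻¹ − J_R⁻¹ is positive semi-definite. (This is the matrix inequality to which the comparison of the IID asymptotic variances of the MC-MLE and NCE estimators reduces: with V = ∇_ξ g_ξ(Y) and R = τ f_ψ(Y)/(τ f_ψ(Y) + f_θ(Y)), it expresses V^IS_τ(ξ*) ⪰ V^NCE_τ(ξ*).) -/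

import Mathlib

open MeasureTheory Matrix

private lemma ptwise {n : ℕ} {Ω : Type*} (V : Ω → Fin n → ℝ) (a b : Fin n → ℝ)
    (w : Ω → ℝ) (ω : Ω) :
    (a ⬝ᵥ V ω) * (b ⬝ᵥ V ω) * w ω = ∑ i, ∑ j, a i * b j * (V ω i * V ω j * w ω) := by
  rw [Finset.sum_comm]
  simp only [dotProduct, Finset.sum_mul, Finset.mul_sum]
  exact Finset.sum_congr rfl fun i _ => Finset.sum_congr rfl fun j _ => by ring

private lemma integ {n : ℕ} {Ω : Type*} [MeasurableSpace Ω] {P : Measure Ω}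
    {V : Ω → Fin n → ℝ} {w : Ω → ℝ}
    (hint : ∀ i j, Integrable (fun ω => V ω i * V ω j * w ω) P) (a b : Fin n → ℝ) :
    Integrable (fun ω => (a ⬝ᵥ V ω) * (b ⬝ᵥ V ω) * w ω) P := by
  have : (fun ω => (a ⬝ᵥ V ω) * (b ⬝ᵥ V ω) * w ω)
      = fun ω => ∑ i, ∑ j, a i * b j * (V ω i * V ω j * w ω) :=
    funext fun ω => ptwise V a b w ω
  rw [this]
  exact integrable_finset_sum _ fun i _ =>
    integrable_finset_sum _ fun j _ => ((hint i j).const_mul _)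

private lemma quad {n : ℕ} {Ω : Type*} [MeasurableSpace Ω] {P : Measure Ω}
    {V : Ω → Fin n → ℝ} {w : Ω → ℝ}
    (hint : ∀ i j, Integrable (fun ω => V ω i * V ω j * w ω) P) (a b : Fin n → ℝ) :
    a ⬝ᵥ ((Matrix.of fun i j => ∫ ω, V ω i * V ω j * w ω ∂P) *ᵥ b)
      = ∫ ω, (a ⬝ᵥ V ω) * (b ⬝ᵥ V ω) * w ω ∂P := by
  have h1 : ∀ ω, (a ⬝ᵥ V ω) * (b ⬝ᵥ V ω) * w ω
      = ∑ i, ∑ j, a i * b j * (V ω i * V ω j * w ω) := ptwise V a b w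
  rw [integral_congr_ae (Filter.Eventually.of_forall h1),
    integral_finset_sum _ fun i _ => integrable_finset_sum _ fun j _ => ((hint i j).const_mul _)]
  simp only [dotProduct, mulVec, Matrix.of_apply]
  rw [Finset.sum_congr rfl fun i _ =>
    integral_finset_sum _ fun j _ => ((hint i j).const_mul (a i * b j))]
  refine Finset.sum_congr rfl fun i _ => ?_
  rw [Finset.mul_sum]
  refine Finset.sum_congr rfl fun j _ => ?_
  rw [integral_const_mul]
  ring

/-- Let `V : Ω → ℝ^n` be a random vector and `R : Ω → (0,∞)` measurable,
with all entries of `V Vᵀ R`, `V Vᵀ` and `V Vᵀ / R` integrable, and with both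
`J = E[V Vᵀ]` and `J_R = E[V Vᵀ R]` invertible. Then
`J⁻¹ E[V Vᵀ / R] J⁻¹ - J_R⁻¹` is positive semi-definite (the matrix inequality
`V^IS_τ ⪰ V^NCE_τ` for the IID asymptotic variances). -/
theorem stmt12
    {n : ℕ} {Ω : Type*} [MeasurableSpace Ω] (P : Measure Ω) [IsProbabilityMeasure P]
    (V : Ω → Fin n → ℝ) (R : Ω → ℝ)
    (hV : Measurable V) (hR : Measurable R) (hRpos : ∀ ω, 0 < R ω)
    (hint1 : ∀ i j, Integrable (fun ω => V ω i * V ω j * R ω) P)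
    (hint2 : ∀ i j, Integrable (fun ω => V ω i * V ω j) P)
    (hint3 : ∀ i j, Integrable (fun ω => V ω i * V ω j / R ω) P)
    (hJinv : IsUnit ((Matrix.of fun i j => ∫ ω, V ω i * V ω j ∂P :
        Matrix (Fin n) (Fin n) ℝ)).det)
    (hJRinv : IsUnit ((Matrix.of fun i j => ∫ ω, V ω i * V ω j * R ω ∂P :
        Matrix (Fin n) (Fin n) ℝ)).det) :
    ((Matrix.of fun i j => ∫ ω, V ω i * V ω j ∂P : Matrix (Fin n) (Fin n) ℝ)⁻¹
        * (Matrix.of fun i j => ∫ ω, V ω i * V ω j / R ω ∂P : Matrix (Fin n) (Fin n) ℝ)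
        * (Matrix.of fun i j => ∫ ω, V ω i * V ω j ∂P : Matrix (Fin n) (Fin n) ℝ)⁻¹
      - (Matrix.of fun i j => ∫ ω, V ω i * V ω j * R ω ∂P :
          Matrix (Fin n) (Fin n) ℝ)⁻¹).PosSemidef := by
  set J : Matrix (Fin n) (Fin n) ℝ := Matrix.of fun i j => ∫ ω, V ω i * V ω j ∂P with hJdef
  set JR : Matrix (Fin n) (Fin n) ℝ := Matrix.of fun i j => ∫ ω, V ω i * V ω j * R ω ∂P
    with hJRdef
  set M : Matrix (Fin n) (Fin n) ℝ := Matrix.of fun i j => ∫ ω, V ω i * V ω j / R ω ∂P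
    with hMdef
  -- rewrite integrands in the uniform `* w` shape
  have hint2' : ∀ i j, Integrable (fun ω => V ω i * V ω j * (1 : ℝ)) P := by
    simpa using hint2
  have hint3' : ∀ i j, Integrable (fun ω => V ω i * V ω j * (R ω)⁻¹) P := by
    simpa [div_eq_mul_inv] using hint3
  have hJeq : J = Matrix.of fun i j => ∫ ω, V ω i * V ω j * (1 : ℝ) ∂P := by
    simp [hJdef]
  have hMeq : M = Matrix.of fun i j => ∫ ω, V ω i * V ω j * (R ω)⁻¹ ∂P := by
    simp [hMdef, div_eq_mul_inv]
  -- symmetry facts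
  have hJs : Jᵀ = J := by
    ext i j
    simp only [transpose_apply, hJdef, Matrix.of_apply]
    exact integral_congr_ae (Filter.Eventually.of_forall fun ω => by ring)
  have hJRs : JRᵀ = JR := by
    ext i j
    simp only [transpose_apply, hJRdef, Matrix.of_apply]
    exact integral_congr_ae (Filter.Eventually.of_forall fun ω => by ring)
  have hMs : Mᵀ = M := by
    ext i j
    simp only [transpose_apply, hMdef, Matrix.of_apply]
    exact integral_congr_ae (Filter.Eventually.of_forall fun ω => by ring)
  have hJis : (J⁻¹)ᵀ = J⁻¹ := by rw [transpose_nonsing_inv, hJs]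
  have hJRis : (JR⁻¹)ᵀ = JR⁻¹ := by rw [transpose_nonsing_inv, hJRs]
  have hJJ : J * J⁻¹ = 1 := mul_nonsing_inv J hJinv
  have hJRJR : JR * JR⁻¹ = 1 := mul_nonsing_inv JR hJRinv
  rw [posSemidef_iff_dotProduct_mulVec]
  constructor
  · -- Hermitian
    show (J⁻¹ * M * J⁻¹ - JR⁻¹)ᴴ = _
    rw [conjTranspose_eq_transpose_of_trivial, transpose_sub, transpose_mul, transpose_mul,
      hJis, hMs, hJRis, mul_assoc]
  · intro x
    rw [star_trivial]
    set a : Fin n → ℝ := J⁻¹ *ᵥ x with ha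
    set b : Fin n → ℝ := JR⁻¹ *ᵥ x with hb
    set A : ℝ := ∫ ω, (a ⬝ᵥ V ω) * (a ⬝ᵥ V ω) * (R ω)⁻¹ ∂P with hA
    set Bv : ℝ := ∫ ω, (a ⬝ᵥ V ω) * (b ⬝ᵥ V ω) * (1 : ℝ) ∂P with hBv
    set C : ℝ := ∫ ω, (b ⬝ᵥ V ω) * (b ⬝ᵥ V ω) * R ω ∂P with hC
    -- t = A
    have hT : x ⬝ᵥ ((J⁻¹ * M * J⁻¹) *ᵥ x) = A := by
      have h1 : (J⁻¹ * M * J⁻¹) *ᵥ x = J⁻¹ *ᵥ (M *ᵥ a) := by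
        rw [ha, mulVec_mulVec, mulVec_mulVec]
      rw [h1, dotProduct_mulVec,
        show x ᵥ* J⁻¹ = a from by rw [← hJis, vecMul_transpose, ha], hMeq,
        quad hint3' a a]
    -- s = x ⬝ᵥ b, and s = C, s = Bv
    have hXB : JR *ᵥ b = x := by rw [hb, mulVec_mulVec, hJRJR, one_mulVec]
    have hS : x ⬝ᵥ (JR⁻¹ *ᵥ x) = C := by
      rw [← hb, ← hXB, dotProduct_comm, hJRdef, quad hint1 b b]
    have hSB : x ⬝ᵥ (JR⁻¹ *ᵥ x) = Bv := by
      rw [hBv, ← quad hint2' a b, ← hJeq, dotProduct_mulVec a J b,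
        show a ᵥ* J = x from by rw [← hJs, vecMul_transpose, ha, mulVec_mulVec, hJJ, one_mulVec],
        ← hb]
    -- nonnegativity
    have hAnn : 0 ≤ A :=
      integral_nonneg fun ω => mul_nonneg (mul_self_nonneg _) (inv_nonneg.2 (hRpos ω).le)
    have hCnn : 0 ≤ C :=
      integral_nonneg fun ω => mul_nonneg (mul_self_nonneg _) (hRpos ω).le
    -- Cauchy–Schwarz via discriminant
    have hdisc : discrim A (2 * Bv) C ≤ 0 := by
      apply discrim_le_zero
      intro c
      have key : A * (c * c) + 2 * Bv * c + C
          = ∫ ω, (c * (a ⬝ᵥ V ω) + (b ⬝ᵥ V ω) * R ω) ^ 2 / R ω ∂P := by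
        have hpt : ∀ ω, (c * (a ⬝ᵥ V ω) + (b ⬝ᵥ V ω) * R ω) ^ 2 / R ω
            = (c * c) * ((a ⬝ᵥ V ω) * (a ⬝ᵥ V ω) * (R ω)⁻¹)
              + (2 * c) * ((a ⬝ᵥ V ω) * (b ⬝ᵥ V ω) * (1 : ℝ))
              + (b ⬝ᵥ V ω) * (b ⬝ᵥ V ω) * R ω := by
          intro ω
          have hR0 : R ω ≠ 0 := (hRpos ω).ne'
          field_simp
          ring
        rw [integral_congr_ae (Filter.Eventually.of_forall hpt)]
        have I1 : Integrable (fun ω => (c * c) * ((a ⬝ᵥ V ω) * (b ⬝ᵥ V ω) * (1:ℝ))) P :=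
          (integ hint2' a b).const_mul _
        have I1' : Integrable (fun ω => (c * c) * ((a ⬝ᵥ V ω) * (a ⬝ᵥ V ω) * (R ω)⁻¹)) P :=
          (integ hint3' a a).const_mul _
        have I2 : Integrable (fun ω => (2 * c) * ((a ⬝ᵥ V ω) * (b ⬝ᵥ V ω) * (1:ℝ))) P :=
          (integ hint2' a b).const_mul _
        have I3 : Integrable (fun ω => (b ⬝ᵥ V ω) * (b ⬝ᵥ V ω) * R ω) P := integ hint1 b b
        have I12 : Integrable (fun ω => (c * c) * ((a ⬝ᵥ V ω) * (a ⬝ᵥ V ω) * (R ω)⁻¹)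
            + (2 * c) * ((a ⬝ᵥ V ω) * (b ⬝ᵥ V ω) * (1:ℝ))) P := I1'.add I2
        rw [integral_add I12 I3, integral_add I1' I2,
          integral_const_mul, integral_const_mul, ← hA, ← hBv, ← hC]
        ring
      rw [key]
      exact integral_nonneg fun ω =>
        div_nonneg (sq_nonneg _) (hRpos ω).le
    have hBvC : Bv * Bv ≤ A * C := by
      rw [discrim] at hdisc
      nlinarith [hdisc]
    -- conclude
    rw [sub_mulVec, dotProduct_sub, hT, hS]
    rcases eq_or_lt_of_le hCnn with h0 | h0
    · rw [← h0]
      linarith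
    · have hBC : Bv = C := by rw [← hSB, hS]
      rw [hBC] at hBvC
      have : C ≤ A := le_of_mul_le_mul_right hBvC h0
      linarith
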